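/- Let A be an n×n real matrix, and let Λ = diag(λ₁,…,λₙ) and M = diag(μ₁,…,μₙ) be invertible diagonal matrices. If there exists a nonzero vector x ∈ ℝⁿ with (AᵀΛ⁻¹A − M)x = 0, then there exists a nonzero vector y ∈ ℝⁿ with (AM⁻¹Aᵀ − Λ)y = 0. -/
import Mathlib

open Matrix

theorem stmt_3 (n : ℕ) (A L M : Matrix (Fin n) (Fin n) ℝ)
    (hL : L.IsDiag) (hM : M.IsDiag) (hLinv : IsUnit L) (hMinv : IsUnit M)
    (x : Fin n → ℝ) (hx : x ≠ 0) (h : (Aᵀ * L⁻¹ * A - M) *ᵥ x = 0) :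
    ∃ y : Fin n → ℝ, y ≠ 0 ∧ (A * M⁻¹ * Aᵀ - L) *ᵥ y = 0 := by
  have hLd : IsUnit L.det := (Matrix.isUnit_iff_isUnit_det L).mp hLinv
  have hMd : IsUnit M.det := (Matrix.isUnit_iff_isUnit_det M).mp hMinv
  set y := L⁻¹ *ᵥ (A *ᵥ x) with hy
  have h' : (Aᵀ * L⁻¹ * A) *ᵥ x = M *ᵥ x := by
    have h2 := h
    rw [Matrix.sub_mulVec, sub_eq_zero] at h2
    exact h2
  have key : Aᵀ *ᵥ y = M *ᵥ x := by
    rw [Matrix.mul_assoc, ← Matrix.mulVec_mulVec, ← Matrix.mulVec_mulVec] at h'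
    rw [hy]
    exact h'
  refine ⟨y, ?_, ?_⟩
  · intro hy0
    apply hx
    have hz : M *ᵥ x = 0 := by rw [← key, hy0, Matrix.mulVec_zero]
    have := congrArg (M⁻¹ *ᵥ ·) hz
    simpa [Matrix.mulVec_mulVec, Matrix.nonsing_inv_mul M hMd] using this
  · have h1 : (A * M⁻¹ * Aᵀ) *ᵥ y = A *ᵥ x := by
      rw [Matrix.mul_assoc, ← Matrix.mulVec_mulVec, ← Matrix.mulVec_mulVec, key,
        Matrix.mulVec_mulVec, Matrix.mulVec_mulVec, Matrix.mul_assoc,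
        Matrix.nonsing_inv_mul M hMd, Matrix.mul_one]
    have h2 : L *ᵥ y = A *ᵥ x := by
      rw [hy, Matrix.mulVec_mulVec, Matrix.mul_nonsing_inv L hLd, Matrix.one_mulVec]
    rw [Matrix.sub_mulVec, h1, h2, sub_self]
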